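/- There exists a family H of functions from ℕ to ℕ, each with all values ≥ 1 and limsup equal to ∞, with |H| = 𝔠 (the cardinality of the continuum), such that for all distinct f, g ∈ H, fN(f) ⊄ fN(g); i.e., the ideals fN(f) for f ∈ H form an antichain under inclusion of cardinality 𝔠. -/

import Mathlib

open Filter Set

/-- The basic clopen set `[σ]` in the Baire space determined by a finite sequence `σ`. -/
def cylinder (σ : List ℕ) : Set (ℕ → ℕ) :=
  {x | ∀ i : Fin σ.length, x i = σ.get i}

/-- `limsup_n h(n) = ∞`, i.e. `h` takes arbitrarily large values frequently. -/
def LimsupInfty (h : ℕ → ℕ) : Prop :=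
  ∀ m : ℕ, ∃ᶠ n in Filter.atTop, m ≤ h n

/-- The family `fN(h)` of fake null sets: `F ∈ fN(h)` iff for every `ε > 0` there is a
sequence of finite sequences `σ_n` with `∑ 1/h(|σ_n|) < ε` covering `F`. -/
def fN (h : ℕ → ℕ) (F : Set (ℕ → ℕ)) : Prop :=
  ∀ ε : ℝ, 0 < ε →
    ∃ σ : ℕ → List ℕ,
      Summable (fun n => (1 : ℝ) / (h (σ n).length : ℝ)) ∧
      (∑' n, (1 : ℝ) / (h (σ n).length : ℝ)) < ε ∧
      F ⊆ ⋃ n, cylinder (σ n)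

/-- The restriction of `x` to the interval `[l, u)`, extended by `0` elsewhere. -/
def restrIco (x : ℕ → ℕ) (l u : ℕ) : ℕ → ℕ :=
  fun i => if l ≤ i ∧ i < u then x i else 0

/-- `J` is a set of patterns on the interval `[l, u)`: every element vanishes off `[l, u)`. -/
def SuppIco (l u : ℕ) (J : Set (ℕ → ℕ)) : Prop :=
  ∀ σ ∈ J, ∀ i, ¬ (l ≤ i ∧ i < u) → σ i = 0

/-- The family `fE(h)`: partition `ℕ` into consecutive nonempty intervals `I_n = [a n, a (n+1))`
(`a 0 = 0`, `a` strictly increasing), patterns `J_n ⊆ ω^{I_n}` with `∑ |J_n|/h(|I_n|) < ∞`,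
and `F ⊆ {x : x↾I_n ∈ J_n for all but finitely many n}`. -/
def fE (h : ℕ → ℕ) (F : Set (ℕ → ℕ)) : Prop :=
  ∃ a : ℕ → ℕ, a 0 = 0 ∧ StrictMono a ∧
    ∃ J : ℕ → Set (ℕ → ℕ),
      (∀ n, SuppIco (a n) (a (n+1)) (J n)) ∧
      (∀ n, (J n).Finite) ∧
      Summable (fun n => ((J n).ncard : ℝ) / (h (a (n+1) - a n) : ℝ)) ∧
      F ⊆ {x | ∀ᶠ n in Filter.atTop, restrIco x (a n) (a (n+1)) ∈ J n}

/-- The family `fS(h)` of fake small sets: as `fE(h)` but with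
`x↾I_n ∈ J_n` for infinitely many `n`. -/
def fS (h : ℕ → ℕ) (F : Set (ℕ → ℕ)) : Prop :=
  ∃ a : ℕ → ℕ, a 0 = 0 ∧ StrictMono a ∧
    ∃ J : ℕ → Set (ℕ → ℕ),
      (∀ n, SuppIco (a n) (a (n+1)) (J n)) ∧
      (∀ n, (J n).Finite) ∧
      Summable (fun n => ((J n).ncard : ℝ) / (h (a (n+1) - a n) : ℝ)) ∧
      F ⊆ {x | ∃ᶠ n in Filter.atTop, restrIco x (a n) (a (n+1)) ∈ J n}

/-- The family `fE(Fin)`: as `fE(h)` but one only requires each pattern set `J_n` to be finite. -/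
def fEFin (F : Set (ℕ → ℕ)) : Prop :=
  ∃ a : ℕ → ℕ, a 0 = 0 ∧ StrictMono a ∧
    ∃ J : ℕ → Set (ℕ → ℕ),
      (∀ n, SuppIco (a n) (a (n+1)) (J n)) ∧
      (∀ n, (J n).Finite) ∧
      F ⊆ {x | ∀ᶠ n in Filter.atTop, restrIco x (a n) (a (n+1)) ∈ J n}

/-- The family `fS(Fin)`: as `fS(h)` but one only requires each pattern set `J_n` to be finite. -/
def fSFin (F : Set (ℕ → ℕ)) : Prop :=
  ∃ a : ℕ → ℕ, a 0 = 0 ∧ StrictMono a ∧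
    ∃ J : ℕ → Set (ℕ → ℕ),
      (∀ n, SuppIco (a n) (a (n+1)) (J n)) ∧
      (∀ n, (J n).Finite) ∧
      F ⊆ {x | ∃ᶠ n in Filter.atTop, restrIco x (a n) (a (n+1)) ∈ J n}

/-- The family `fN(Fin)`: there are finite `S_n ⊆ ω^n` with
`F ⊆ {x : x↾n ∈ S_n for infinitely many n}`. -/
def fNFin (F : Set (ℕ → ℕ)) : Prop :=
  ∃ S : (n : ℕ) → Set (Fin n → ℕ),
    (∀ n, (S n).Finite) ∧
    F ⊆ {x | ∃ᶠ n in Filter.atTop, (fun i : Fin n => x i) ∈ S n}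

/-- The σ-ideal `M_-`: there are `x_F ∈ ω^ω` and a partition of `ℕ` into consecutive nonempty
intervals `I_n = [a n, a (n+1))` with `F ⊆ {x : x↾I_n ≠ x_F↾I_n for all but finitely many n}`. -/
def Mminus (F : Set (ℕ → ℕ)) : Prop :=
  ∃ xF : ℕ → ℕ, ∃ a : ℕ → ℕ, a 0 = 0 ∧ StrictMono a ∧
    F ⊆ {x | ∀ᶠ n in Filter.atTop, ∃ i, a n ≤ i ∧ i < a (n+1) ∧ x i ≠ xF i}

namespace Stmt17Aux

/-- Code of the length-`k+1` prefix of `x`, always `≥ 1`. -/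
def code (x : ℕ → Bool) (k : ℕ) : ℕ :=
  Encodable.encode (List.ofFn fun i : Fin (k+1) => x i) + 1

lemma code_eq {x y : ℕ → Bool} {k m : ℕ} (h : code x k = code y m) :
    k = m ∧ ∀ i ≤ k, x i = y i := by
  unfold code at h
  have h' := Encodable.encode_injective (add_right_cancel h)
  have hl := congrArg List.length h'
  simp only [List.length_ofFn, add_left_inj] at hl
  subst hl
  rw [List.ofFn_inj] at h'
  exact ⟨rfl, fun i hi => congrFun h' ⟨i, Nat.lt_succ_of_le hi⟩⟩

lemma code_injective (x : ℕ → Bool) : Function.Injective (code x) :=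
  fun _ _ h => (code_eq h).1

def Aset (x : ℕ → Bool) : Set ℕ := Set.range (code x)

lemma zero_notmem_Aset (x : ℕ → Bool) : 0 ∉ Aset x := by
  rintro ⟨k, hk⟩; simp [code] at hk

lemma Aset_infinite (x : ℕ → Bool) : (Aset x).Infinite :=
  Set.infinite_of_injective_forall_mem (code_injective x) (fun k => ⟨k, rfl⟩)

noncomputable def ff (x : ℕ → Bool) (n : ℕ) : ℕ :=
  @ite ℕ (n ∈ Aset x) (Classical.propDecidable _) (2 ^ 2 ^ n) 1

lemma ff_mem {x : ℕ → Bool} {n : ℕ} (h : n ∈ Aset x) : ff x n = 2 ^ 2 ^ n := by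
  rw [ff, if_pos h]

lemma ff_nmem {x : ℕ → Bool} {n : ℕ} (h : n ∉ Aset x) : ff x n = 1 := by
  rw [ff, if_neg h]

lemma one_le_ff (x : ℕ → Bool) (n : ℕ) : 1 ≤ ff x n := by
  by_cases h : n ∈ Aset x
  · rw [ff_mem h]; exact Nat.one_le_two_pow
  · rw [ff_nmem h]

lemma ff_pos (x : ℕ → Bool) (n : ℕ) : 0 < ff x n := one_le_ff x n

lemma ff_pow (x : ℕ → Bool) (n : ℕ) : ∃ e, ff x n = 2 ^ e := by
  by_cases h : n ∈ Aset x
  · exact ⟨2 ^ n, ff_mem h⟩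
  · exact ⟨0, by rw [ff_nmem h, pow_zero]⟩

lemma mem_Aset_iff (x : ℕ → Bool) (n : ℕ) : n ∈ Aset x ↔ ff x n ≠ 1 := by
  constructor
  · intro h; rw [ff_mem h]
    have : 1 < 2 ^ 2 ^ n := Nat.one_lt_two_pow (by positivity)
    omega
  · intro h; by_contra hn; exact h (ff_nmem hn)

lemma ff_injective : Function.Injective ff := by
  intro x y h
  by_contra hne
  obtain ⟨i0, hi0⟩ := Function.ne_iff.1 hne
  have hx : code x i0 ∈ Aset x := ⟨i0, rfl⟩
  have hy : code x i0 ∈ Aset y := by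
    rw [mem_Aset_iff, ← h, ← mem_Aset_iff]; exact hx
  obtain ⟨m, hm⟩ := hy
  obtain ⟨rfl, heq⟩ := code_eq hm
  exact hi0 ((heq _ le_rfl).symm)

lemma exists_mem_diff {x y : ℕ → Bool} {i0 : ℕ} (hi0 : x i0 ≠ y i0) (M : ℕ) :
    ∃ l, M < l ∧ l ∈ Aset x ∧ l ∉ Aset y := by
  have hS : (code x '' (Set.Ici i0)).Infinite :=
    (Set.Ici_infinite i0).image ((code_injective x).injOn)
  obtain ⟨l, hl, hMl⟩ := hS.exists_gt M
  obtain ⟨k, hk, rfl⟩ := hl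
  refine ⟨code x k, hMl, ⟨k, rfl⟩, ?_⟩
  rintro ⟨m, hm⟩
  obtain ⟨rfl, heq⟩ := code_eq hm
  exact hi0 ((heq _ hk).symm)


/-- `Nn y l = max_{m ≤ l} ff y m`. -/
noncomputable def Nn (y : ℕ → Bool) (l : ℕ) : ℕ := (Finset.range (l+1)).sup (ff y)

noncomputable def kk (y : ℕ → Bool) (n : ℕ) : ℕ := Nn y (n+1) / Nn y n

def Fset (y : ℕ → Bool) : Set (ℕ → ℕ) := {z | ∀ n, z n < kk y n}

lemma ff_le_Nn (y : ℕ → Bool) {m l : ℕ} (h : m ≤ l) : ff y m ≤ Nn y l :=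
  Finset.le_sup (Finset.mem_range.2 (Nat.lt_succ_of_le h))

lemma Nn_pos (y : ℕ → Bool) (l : ℕ) : 0 < Nn y l :=
  lt_of_lt_of_le (ff_pos y 0) (ff_le_Nn y (Nat.zero_le l))

lemma one_le_Nn (y : ℕ → Bool) (l : ℕ) : 1 ≤ Nn y l := Nn_pos y l

lemma Nn_mono (y : ℕ → Bool) {l l' : ℕ} (h : l ≤ l') : Nn y l ≤ Nn y l' :=
  Finset.sup_mono (Finset.range_subset_range.2 (by omega))

lemma Nn_pow (y : ℕ → Bool) (l : ℕ) : ∃ e, Nn y l = 2 ^ e := by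
  obtain ⟨i, _, hi⟩ := Finset.exists_mem_eq_sup (Finset.range (l+1))
    ⟨0, Finset.mem_range.2 (Nat.succ_pos l)⟩ (ff y)
  rw [Nn, hi]; exact ff_pow y i

lemma Nn_dvd (y : ℕ → Bool) (l : ℕ) : Nn y l ∣ Nn y (l+1) := by
  obtain ⟨a, ha⟩ := Nn_pow y l
  obtain ⟨b, hb⟩ := Nn_pow y (l+1)
  have hle : (2:ℕ) ^ a ≤ 2 ^ b := by rw [← ha, ← hb]; exact Nn_mono y (Nat.le_succ l)
  rw [ha, hb]
  exact pow_dvd_pow 2 ((Nat.pow_le_pow_iff_right one_lt_two).1 hle)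

lemma Nn_zero (y : ℕ → Bool) : Nn y 0 = 1 := by
  have : Finset.range 1 = {0} := rfl
  rw [Nn, this, Finset.sup_singleton, ff_nmem (zero_notmem_Aset y)]

lemma kk_mul (y : ℕ → Bool) (n : ℕ) : Nn y n * kk y n = Nn y (n+1) :=
  Nat.mul_div_cancel' (Nn_dvd y n)

lemma kk_pos (y : ℕ → Bool) (n : ℕ) : 0 < kk y n :=
  Nat.div_pos (Nn_mono y (Nat.le_succ n)) (Nn_pos y n)

lemma prod_kk_Ico (y : ℕ → Bool) {a b : ℕ} (h : a ≤ b) :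
    Nn y a * ∏ i ∈ Finset.Ico a b, kk y i = Nn y b := by
  induction b, h using Nat.le_induction with
  | base => simp
  | succ b hab ih =>
      rw [Finset.prod_Ico_succ_top hab, ← mul_assoc, ih, kk_mul]

lemma prod_kk (y : ℕ → Bool) (l : ℕ) :
    ∏ i ∈ Finset.range l, kk y i = Nn y l := by
  have := prod_kk_Ico y (Nat.zero_le l)
  rwa [Nn_zero, one_mul, ← Finset.range_eq_Ico] at this

lemma Nn_le_of_nmem (y : ℕ → Bool) {l : ℕ} (h : (l+1) ∉ Aset y) :
    Nn y (l+1) ≤ 2 ^ 2 ^ l := by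
  apply Finset.sup_le
  intro m hm
  rw [Finset.mem_range] at hm
  by_cases hmA : m ∈ Aset y
  · have hml : m ≤ l := by
      rcases Nat.lt_succ_iff_lt_or_eq.1 (by omega : m < l + 2) with h1 | h1
      · omega
      · exact absurd (h1 ▸ hmA) h
    rw [ff_mem hmA]
    exact Nat.pow_le_pow_right (by norm_num) (Nat.pow_le_pow_right (by norm_num) hml)
  · rw [ff_nmem hmA]; exact Nat.one_le_two_pow

lemma key_ratio {x y : ℕ → Bool} {l : ℕ} (hx : (l+1) ∈ Aset x) (hy : (l+1) ∉ Aset y) :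
    Nn y (l+1) * 2 ^ (l+1) ≤ ff x (l+1) := by
  rw [ff_mem hx]
  calc Nn y (l+1) * 2 ^ (l+1) ≤ 2 ^ 2 ^ l * 2 ^ (l+1) :=
        Nat.mul_le_mul_right _ (Nn_le_of_nmem y hy)
    _ = 2 ^ (2 ^ l + (l+1)) := by rw [← pow_add]
    _ ≤ 2 ^ (2 ^ l + 2 ^ l) := by
        apply Nat.pow_le_pow_right (by norm_num)
        have := Nat.lt_two_pow_self (n := l)
        omega
    _ = 2 ^ 2 ^ (l+1) := by rw [pow_succ]; ring


lemma cylinder_isOpen (σ : List ℕ) : IsOpen (cylinder σ) := by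
  have : cylinder σ = ⋂ i : Fin σ.length, (fun z : ℕ → ℕ => z (i : ℕ)) ⁻¹' {σ.get i} := by
    ext z; simp [cylinder]
  rw [this]
  exact isOpen_iInter_of_finite fun i =>
    (continuous_apply (i : ℕ)).isOpen_preimage _ (isOpen_discrete _)

lemma Fset_isCompact (y : ℕ → Bool) : IsCompact (Fset y) := by
  have : Fset y = Set.pi Set.univ (fun n => (Finset.range (kk y n) : Set ℕ)) := by
    ext z; simp [Fset, Set.mem_pi]
  rw [this]
  exact isCompact_univ_pi (fun n => (Finset.range (kk y n)).finite_toSet.isCompact)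

lemma not_fN (y : ℕ → Bool) : ¬ fN (ff y) (Fset y) := by
  intro h
  obtain ⟨σ, hsum, htsum, hcov⟩ := h (1/2) (by norm_num)
  obtain ⟨t, ht⟩ := (Fset_isCompact y).elim_finite_subcover _
    (fun n => cylinder_isOpen (σ n)) hcov
  classical
  set L := (t.sup fun n => (σ n).length) + 1 with hLdef
  have hlen : ∀ n ∈ t, (σ n).length ≤ L := by
    intro n hn
    have : (σ n).length ≤ t.sup fun n => (σ n).length := Finset.le_sup (f := fun n => (σ n).length) hn
    omega
  set V := Fintype.piFinset (fun i : Fin L => Finset.range (kk y i)) with hVdef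
  set W := fun n => Fintype.piFinset
    (fun i : Fin L => if h : (i:ℕ) < (σ n).length
      then ({(σ n).get ⟨i, h⟩} : Finset ℕ) else Finset.range (kk y i)) with hWdef
  -- V is covered by the W n
  have hsub : V ⊆ t.biUnion W := by
    intro v hv
    have hv' := Fintype.mem_piFinset.1 hv
    set z : ℕ → ℕ := fun i => if h : i < L then v ⟨i, h⟩ else 0 with hzdef
    have hzF : z ∈ Fset y := by
      intro n
      by_cases h : n < L
      · simpa [hzdef, dif_pos h] using Finset.mem_range.1 (hv' ⟨n, h⟩)
      · simpa [hzdef, dif_neg h] using kk_pos y n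
    have := ht hzF
    rw [Set.mem_iUnion₂] at this
    obtain ⟨n, hnt, hcyl⟩ := this
    refine Finset.mem_biUnion.2 ⟨n, hnt, Fintype.mem_piFinset.2 fun i => ?_⟩
    by_cases h : (i:ℕ) < (σ n).length
    · rw [dif_pos h]
      have hc := hcyl ⟨(i:ℕ), h⟩
      have : z (i:ℕ) = v i := by simp [hzdef, dif_pos i.isLt]
      rw [this] at hc
      simpa using hc
    · rw [dif_neg h]; exact hv' i
  -- cardinalities
  have hcardV : V.card = Nn y L := by
    rw [hVdef, Fintype.card_piFinset]
    simp only [Finset.card_range]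
    rw [Fin.prod_univ_eq_prod_range, prod_kk]
  have hcardW : ∀ n ∈ t, Nn y ((σ n).length) * (W n).card = Nn y L := by
    intro n hn
    have hlL : (σ n).length ≤ L := hlen n hn
    have : (W n).card = ∏ i ∈ Finset.Ico ((σ n).length) L, kk y i := by
      rw [hWdef, Fintype.card_piFinset]
      have h1 : ∀ i : Fin L,
          (if h : (i:ℕ) < (σ n).length
            then ({(σ n).get ⟨i, h⟩} : Finset ℕ) else Finset.range (kk y i)).card
          = if (i:ℕ) < (σ n).length then 1 else kk y (i:ℕ) := by
        intro i
        by_cases h : (i:ℕ) < (σ n).length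
        · rw [dif_pos h, if_pos h]; simp
        · rw [dif_neg h, if_neg h]; simp
      rw [Finset.prod_congr rfl (fun i _ => h1 i), Fin.prod_univ_eq_prod_range
        (fun i => if i < (σ n).length then 1 else kk y i)]
      rw [Finset.range_eq_Ico, ← Finset.prod_Ico_consecutive _ (Nat.zero_le ((σ n).length)) hlL]
      have h2 : ∏ i ∈ Finset.Ico 0 ((σ n).length),
          (if i < (σ n).length then 1 else kk y i) = 1 := by
        apply Finset.prod_eq_one
        intro i hi
        rw [Finset.mem_Ico] at hi
        rw [if_pos hi.2]
      have h3 : ∏ i ∈ Finset.Ico ((σ n).length) L,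
          (if i < (σ n).length then 1 else kk y i)
          = ∏ i ∈ Finset.Ico ((σ n).length) L, kk y i := by
        apply Finset.prod_congr rfl
        intro i hi
        rw [Finset.mem_Ico] at hi
        rw [if_neg (by omega)]
      rw [h2, h3, one_mul]
    rw [this]
    exact prod_kk_Ico y hlL
  -- counting inequality over ℕ
  have hcount : Nn y L ≤ ∑ n ∈ t, (W n).card := by
    rw [← hcardV]
    exact le_trans (Finset.card_le_card hsub) (Finset.card_biUnion_le)
  -- move to ℝ
  have hNL : (0:ℝ) < (Nn y L : ℝ) := by exact_mod_cast Nn_pos y L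
  have hreal : (1:ℝ) ≤ ∑ n ∈ t, 1 / (Nn y ((σ n).length) : ℝ) := by
    have h1 : (Nn y L : ℝ) ≤ ∑ n ∈ t, ((W n).card : ℝ) := by
      exact_mod_cast hcount
    have h2 : ∀ n ∈ t, ((W n).card : ℝ) = (Nn y L : ℝ) / (Nn y ((σ n).length) : ℝ) := by
      intro n hn
      have := hcardW n hn
      have hpos : (0:ℝ) < (Nn y ((σ n).length) : ℝ) := by exact_mod_cast Nn_pos y _
      field_simp
      exact_mod_cast (mul_comm (Nn y ((σ n).length)) ((W n).card) ▸ this)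
    rw [Finset.sum_congr rfl h2] at h1
    have h3 : ∑ n ∈ t, (Nn y L : ℝ) / (Nn y ((σ n).length) : ℝ)
        = (Nn y L : ℝ) * ∑ n ∈ t, 1 / (Nn y ((σ n).length) : ℝ) := by
      rw [Finset.mul_sum]
      apply Finset.sum_congr rfl
      intro n _
      rw [div_eq_mul_one_div]
    rw [h3] at h1
    calc (1:ℝ) = (Nn y L : ℝ) / (Nn y L : ℝ) := by rw [div_self (ne_of_gt hNL)]
      _ ≤ _ := by
          rw [div_le_iff₀ hNL]
          calc (Nn y L : ℝ) ≤ (Nn y L : ℝ) * ∑ n ∈ t, 1 / (Nn y ((σ n).length) : ℝ) := h1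
            _ = _ := by ring
  -- compare with the cost sum
  have hcomp : ∑ n ∈ t, 1 / (Nn y ((σ n).length) : ℝ)
      ≤ ∑ n ∈ t, 1 / (ff y ((σ n).length) : ℝ) := by
    apply Finset.sum_le_sum
    intro n _
    apply one_div_le_one_div_of_le
    · exact_mod_cast ff_pos y _
    · exact_mod_cast ff_le_Nn y le_rfl
  have hts : ∑ n ∈ t, 1 / (ff y ((σ n).length) : ℝ)
      ≤ ∑' n, 1 / (ff y ((σ n).length) : ℝ) := by
    apply Summable.sum_le_tsum
    · intro n _; positivity
    · exact hsum
  linarith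


lemma mem_fN {x y : ℕ → Bool} {i0 : ℕ} (hi0 : x i0 ≠ y i0) : fN (ff x) (Fset y) := by
  classical
  intro ε hε
  obtain ⟨K, hK⟩ := exists_pow_lt_of_lt_one (show (0:ℝ) < ε/4 by linarith)
    (show (1/2 : ℝ) < 1 by norm_num)
  obtain ⟨l, hlK, hlx, hly⟩ := exists_mem_diff hi0 K
  obtain ⟨l', rfl⟩ : ∃ l', l = l' + 1 := ⟨l - 1, by omega⟩
  -- padding function
  have hpadex : ∀ n : ℕ, ∃ p, p ∈ Aset x ∧ n + K < p := by
    intro n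
    obtain ⟨p, hp, hlt⟩ := (Aset_infinite x).exists_gt (n + K)
    exact ⟨p, hp, hlt⟩
  choose pad hpadA hpadlt using hpadex
  -- the finite level set
  set piF := Fintype.piFinset (fun i : Fin (l'+1) => Finset.range (kk y i)) with hpiF
  have hcard : piF.card = Nn y (l'+1) := by
    rw [hpiF, Fintype.card_piFinset]
    simp only [Finset.card_range]
    rw [Fin.prod_univ_eq_prod_range, prod_kk]
  set σ : ℕ → List ℕ := fun n =>
    if h : n < piF.card
      then List.ofFn ((piF.equivFin.symm ⟨n, h⟩ : {v // v ∈ piF}) : Fin (l'+1) → ℕ)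
      else List.replicate (pad n) 0 with hσ
  have hlen1 : ∀ n (h : n < piF.card), (σ n).length = l' + 1 := by
    intro n h; simp [hσ, dif_pos h]
  have hlen2 : ∀ n, ¬ n < piF.card → (σ n).length = pad n := by
    intro n h; simp [hσ, dif_neg h]
  -- cost estimates
  set c := piF.card with hc
  have hfl_pos : (0:ℝ) < (ff x (l'+1) : ℝ) := by exact_mod_cast ff_pos x (l'+1)
  have hratio : (c : ℝ) / (ff x (l'+1) : ℝ) ≤ (1/2:ℝ)^(l'+1) := by
    have hkey := key_ratio hlx hly
    rw [hcard]
    rw [one_div, inv_pow, ← one_div]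
    rw [div_le_div_iff₀ hfl_pos (by positivity)]
    rw [one_mul]
    exact_mod_cast hkey
  have hKl : (1/2:ℝ)^(l'+1) ≤ (1/2:ℝ)^K :=
    pow_le_pow_of_le_one (by norm_num) (by norm_num) (le_of_lt hlK)
  set C : ℕ → ℝ := fun n => 1 / (ff x ((σ n).length) : ℝ) with hC
  set D : ℕ → ℝ := fun n =>
    (if n < c then (1:ℝ)/(ff x (l'+1) : ℝ) else 0) + (1/2:ℝ)^(n+K+1) with hD
  have hC0 : ∀ n, 0 ≤ C n := by intro n; rw [hC]; positivity
  have hCD : ∀ n, C n ≤ D n := by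
    intro n
    by_cases h : n < c
    · have : C n = 1 / (ff x (l'+1) : ℝ) := by
        simp only [hC]; rw [hlen1 n h]
      rw [this, hD]
      simp only [if_pos h]
      have : (0:ℝ) ≤ (1/2:ℝ)^(n+K+1) := by positivity
      linarith
    · have hCn : C n = 1 / (ff x (pad n) : ℝ) := by
        simp only [hC]; rw [hlen2 n h]
      have hffpad : (2:ℕ)^(n+K+1) ≤ ff x (pad n) := by
        rw [ff_mem (hpadA n)]
        apply Nat.pow_le_pow_right (by norm_num)
        have h1 : n + K + 1 ≤ pad n := hpadlt n
        have h2 : pad n < 2 ^ pad n := Nat.lt_two_pow_self (n := pad n)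
        omega
      have hle : C n ≤ (1/2:ℝ)^(n+K+1) := by
        rw [hCn, one_div, one_div, inv_pow, ← one_div, ← one_div]
        apply one_div_le_one_div_of_le (by positivity)
        exact_mod_cast hffpad
      rw [hD]
      simp only [if_neg h]
      linarith
  have hD1sum : Summable (fun n => if n < c then (1:ℝ)/(ff x (l'+1) : ℝ) else 0) := by
    apply summable_of_ne_finset_zero (s := Finset.range c)
    intro b hb
    rw [Finset.mem_range] at hb
    rw [if_neg hb]
  have hD2eq : (fun n : ℕ => (1/2:ℝ)^(n+K+1)) = fun n : ℕ => (1/2:ℝ)^n * (1/2:ℝ)^(K+1) := by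
    funext n; rw [add_assoc, pow_add]
  have hD2sum : Summable (fun n : ℕ => (1/2:ℝ)^(n+K+1)) := by
    rw [hD2eq]
    exact summable_geometric_two.mul_right _
  have hDsum : Summable D := by
    rw [hD]; exact hD1sum.add hD2sum
  have htD1 : ∑' n, (if n < c then (1:ℝ)/(ff x (l'+1) : ℝ) else 0)
      = (c : ℝ) / (ff x (l'+1) : ℝ) := by
    rw [tsum_eq_sum (s := Finset.range c)
      (by intro b hb; rw [Finset.mem_range] at hb; rw [if_neg hb])]
    rw [Finset.sum_congr rfl (fun b hb => if_pos (Finset.mem_range.1 hb))]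
    rw [Finset.sum_const, Finset.card_range, nsmul_eq_mul]
    ring
  have htD2 : ∑' n : ℕ, (1/2:ℝ)^(n+K+1) = (1/2:ℝ)^K := by
    rw [hD2eq, tsum_mul_right, tsum_geometric_two]
    rw [pow_succ]
    ring
  have htD : ∑' n, D n < ε := by
    rw [hD, Summable.tsum_add hD1sum hD2sum, htD1, htD2]
    have h1 : (c : ℝ) / (ff x (l'+1) : ℝ) ≤ (1/2:ℝ)^K := le_trans hratio hKl
    linarith
  have hCsum : Summable C := Summable.of_nonneg_of_le hC0 hCD hDsum
  refine ⟨σ, hCsum, ?_, ?_⟩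
  case _ =>
    calc ∑' n, C n ≤ ∑' n, D n := Summable.tsum_le_tsum hCD hCsum hDsum
      _ < ε := htD
  case _ =>
    -- coverage
    intro z hz
    have hv : (fun i : Fin (l'+1) => z i) ∈ piF :=
      Fintype.mem_piFinset.2 fun i => Finset.mem_range.2 (hz i)
    set p : {v // v ∈ piF} := ⟨fun i : Fin (l'+1) => z i, hv⟩ with hp
    set n : ℕ := ((piF.equivFin p : Fin piF.card) : ℕ) with hn
    have hnlt : n < piF.card := (piF.equivFin p).isLt
    have hσn : σ n = List.ofFn (fun i : Fin (l'+1) => z i) := by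
      simp only [hσ]
      rw [dif_pos hnlt]
      have : (⟨n, hnlt⟩ : Fin piF.card) = piF.equivFin p := by
        simp [hn]
      rw [this, Equiv.symm_apply_apply]
    refine Set.mem_iUnion.2 ⟨n, ?_⟩
    rw [hσn]  -- membership in cylinder of explicit list
    intro i
    rw [List.get_ofFn]
    simp


lemma limsup_ff (x : ℕ → Bool) : LimsupInfty (ff x) := by
  intro m
  rw [Filter.frequently_atTop]
  intro a
  obtain ⟨p, hpA, hpgt⟩ := (Aset_infinite x).exists_gt (max a m)
  refine ⟨p, le_of_lt (lt_of_le_of_lt (le_max_left a m) hpgt), ?_⟩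
  rw [ff_mem hpA]
  have h1 : m < p := lt_of_le_of_lt (le_max_right a m) hpgt
  have h2 : p < 2 ^ p := Nat.lt_two_pow_self (n := p)
  have h3 : (2:ℕ) ^ p ≤ 2 ^ 2 ^ p := Nat.pow_le_pow_right (by norm_num) (le_of_lt h2)
  omega

end Stmt17Aux

theorem stmt17 :
    ∃ H : Set (ℕ → ℕ),
      Cardinal.mk H = Cardinal.continuum ∧
      (∀ h ∈ H, (∀ n, 1 ≤ h n) ∧ LimsupInfty h) ∧
      (∀ f ∈ H, ∀ g ∈ H, f ≠ g → ∃ F : Set (ℕ → ℕ), fN f F ∧ ¬ fN g F) := by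
  classical
  refine ⟨Set.range Stmt17Aux.ff, ?_, ?_, ?_⟩
  · rw [Cardinal.mk_range_eq _ Stmt17Aux.ff_injective]
    rw [← Cardinal.power_def, Cardinal.mk_bool, Cardinal.mk_nat, Cardinal.two_power_aleph0]
  · intro h hh
    obtain ⟨x, rfl⟩ := hh
    exact ⟨Stmt17Aux.one_le_ff x, Stmt17Aux.limsup_ff x⟩
  · intro f hf g hg hfg
    obtain ⟨x, rfl⟩ := hf
    obtain ⟨y, rfl⟩ := hg
    have hxy : x ≠ y := fun e => hfg (congrArg _ e)
    obtain ⟨i0, hi0⟩ := Function.ne_iff.1 hxy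
    exact ⟨Stmt17Aux.Fset y, Stmt17Aux.mem_fN hi0, Stmt17Aux.not_fN y⟩
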